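/- If S ≤ M n is an isotropic submodule, then the concatenated binary code Ĉ(S) ≤ (Fin n → Fin 4 → ZMod 2) is self-orthogonal: for all w, w' ∈ Ĉ(S), ⟨w, w'⟩ = 0 under the standard dot product ⟨w,w'⟩ = Σ_{j,i} w j i · w' j i. (This is the self-orthogonality part of the Corollary: concatenating an [[n,k,d]] stabilizer code with the [[4,2,2]] code yields a self-dual CSS code.) -/
import Mathlib

/-- Binary symplectic representation of `n`-qubit Pauli operators (up to phase). -/
abbrev M (n : ℕ) : Type := Fin n → ZMod 2 × ZMod 2

/-- The symplectic form: two Paulis commute iff it vanishes. -/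
def symp {n : ℕ} (u v : M n) : ZMod 2 :=
  ∑ j, ((u j).1 * (v j).2 + (u j).2 * (v j).1)

/-- The inner `[[4,2,2]]` encoding of one qubit-pair symplectic entry. -/
def Emap (p : ZMod 2 × ZMod 2) : Fin 4 → ZMod 2 := ![p.1 + p.2, p.1, p.2, 0]

/-- Blockwise `[[4,2,2]]` encoding. -/
def Ehat {n : ℕ} (v : M n) : Fin n → Fin 4 → ZMod 2 := fun j => Emap (v j)

/-- The indicator vector of block `j` (the inner `XXXX`/`ZZZZ` stabilizer). -/
def beta {n : ℕ} (j : Fin n) : Fin n → Fin 4 → ZMod 2 :=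
  fun j' _ => if j' = j then 1 else 0

/-- The concatenated binary code `Ĉ(S)`. -/
def Chat {n : ℕ} (S : Submodule (ZMod 2) (M n)) :
    Submodule (ZMod 2) (Fin n → Fin 4 → ZMod 2) :=
  Submodule.span (ZMod 2) (Set.range (beta (n := n)) ∪ Ehat '' (S : Set (M n)))

/-- The standard dot product on the concatenated space. -/
def dotB {n : ℕ} (w w' : Fin n → Fin 4 → ZMod 2) : ZMod 2 :=
  ∑ j, ∑ i, w j i * w' j i

lemma dotB_add_left {n : ℕ} (a b w : Fin n → Fin 4 → ZMod 2) :
    dotB (a + b) w = dotB a w + dotB b w := by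
  simp [dotB, add_mul, Finset.sum_add_distrib]

lemma dotB_add_right {n : ℕ} (w a b : Fin n → Fin 4 → ZMod 2) :
    dotB w (a + b) = dotB w a + dotB w b := by
  simp [dotB, mul_add, Finset.sum_add_distrib]

lemma dotB_smul_left {n : ℕ} (c : ZMod 2) (a w : Fin n → Fin 4 → ZMod 2) :
    dotB (c • a) w = c * dotB a w := by
  simp [dotB, Finset.mul_sum, mul_assoc]

lemma dotB_smul_right {n : ℕ} (c : ZMod 2) (w a : Fin n → Fin 4 → ZMod 2) :
    dotB w (c • a) = c * dotB w a := by
  simp only [dotB, Finset.mul_sum, Pi.smul_apply, smul_eq_mul]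
  exact Finset.sum_congr rfl fun j _ => Finset.sum_congr rfl fun i _ => by ring

lemma dotB_zero_left {n : ℕ} (w : Fin n → Fin 4 → ZMod 2) : dotB 0 w = 0 := by
  simp [dotB]

lemma dotB_zero_right {n : ℕ} (w : Fin n → Fin 4 → ZMod 2) : dotB w 0 = 0 := by
  simp [dotB]

lemma dotB_beta_beta {n : ℕ} (j j' : Fin n) : dotB (beta j) (beta j') = 0 := by
  simp only [dotB, beta]
  rcases eq_or_ne j j' with h | h
  · subst h
    rw [Finset.sum_eq_single j]
    · simp; decide
    · intro k _ hk; simp [hk]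
    · simp
  · rw [Finset.sum_eq_zero]
    intro k _
    rcases eq_or_ne k j with rfl | hk
    · simp [h]
    · simp [hk]

lemma sum_Emap (p q : ZMod 2 × ZMod 2) :
    ∑ i, Emap p i * Emap q i = p.1 * q.2 + p.2 * q.1 := by
  simp [Emap, Fin.sum_univ_four]
  ring_nf
  rw [show (2 : ZMod 2) = 0 by decide]
  ring

lemma dotB_beta_Ehat {n : ℕ} (j : Fin n) (v : M n) : dotB (beta j) (Ehat v) = 0 := by
  simp only [dotB, beta, Ehat]
  rw [Finset.sum_eq_single j]
  · have : ∀ p : ZMod 2 × ZMod 2, ∑ i, (1 : ZMod 2) * Emap p i = 0 := by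
      intro p; simp [Emap, Fin.sum_univ_four]; ring_nf
      rw [show (2 : ZMod 2) = 0 by decide]; ring
    simpa using this (v j)
  · intro k _ hk; simp [hk]
  · simp

lemma dotB_Ehat_beta {n : ℕ} (v : M n) (j : Fin n) : dotB (Ehat v) (beta j) = 0 := by
  have := dotB_beta_Ehat j v
  simpa [dotB, mul_comm] using this

lemma dotB_Ehat_Ehat {n : ℕ} (u v : M n) : dotB (Ehat u) (Ehat v) = symp u v := by
  simp only [dotB, Ehat, symp, sum_Emap]

theorem stmt2 (n : ℕ) (S : Submodule (ZMod 2) (M n))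
    (hS : ∀ u ∈ S, ∀ v ∈ S, symp u v = 0) :
    ∀ w ∈ Chat S, ∀ w' ∈ Chat S, dotB w w' = 0 := by
  intro w hw w' hw'
  have key : ∀ x ∈ (Set.range (beta (n := n)) ∪ Ehat '' (S : Set (M n))),
      ∀ y ∈ (Set.range (beta (n := n)) ∪ Ehat '' (S : Set (M n))), dotB x y = 0 := by
    rintro x (⟨j, rfl⟩ | ⟨u, hu, rfl⟩) y (⟨j', rfl⟩ | ⟨v, hv, rfl⟩)
    · exact dotB_beta_beta j j'
    · exact dotB_beta_Ehat j v
    · exact dotB_Ehat_beta u j'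
    · rw [dotB_Ehat_Ehat]; exact hS u hu v hv
  induction hw using Submodule.span_induction with
  | mem x hx =>
    induction hw' using Submodule.span_induction with
    | mem y hy => exact key x hx y hy
    | zero => exact dotB_zero_right x
    | add a b _ _ ha hb => rw [dotB_add_right, ha, hb, add_zero]
    | smul c a _ ha => rw [dotB_smul_right, ha, mul_zero]
  | zero => exact dotB_zero_left w'
  | add a b _ _ ha hb => rw [dotB_add_left, ha, hb, add_zero]
  | smul c a _ ha => rw [dotB_smul_left, ha, mul_zero]
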